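/- If z is a type-1 approximation of Prox^D_{τh}(y) with precision ε (that is, G_y(x) ≥ G_y(z) − ε for all x ∈ ℝ^d), then there exists r ∈ ℝ^d with ‖r‖_D ≤ √(2τε) such that (1/τ)D(y − z − r) ∈ ∂_ε h(z). -/

import Mathlib

open Matrix

/-- squared M-norm: ⟨x, M x⟩ -/
noncomputable def sqnorm {d : ℕ} (M : Matrix (Fin d) (Fin d) ℝ) (x : Fin d → ℝ) : ℝ :=
  x ⬝ᵥ M.mulVec x

/-- M-norm: √⟨x, M x⟩ -/
noncomputable def mnorm {d : ℕ} (M : Matrix (Fin d) (Fin d) ℝ) (x : Fin d → ℝ) : ℝ :=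
  Real.sqrt (x ⬝ᵥ M.mulVec x)

lemma dot_symm {d : ℕ} {D : Matrix (Fin d) (Fin d) ℝ} (hD : D.IsHermitian)
    (a b : Fin d → ℝ) : a ⬝ᵥ D *ᵥ b = b ⬝ᵥ D *ᵥ a := by
  have hsym : ∀ i j, D i j = D j i := by
    intro i j
    have := hD.apply i j
    simpa using this.symm
  simp only [dotProduct, Matrix.mulVec, Finset.mul_sum]
  rw [Finset.sum_comm]
  refine Finset.sum_congr rfl fun j _ => Finset.sum_congr rfl fun i _ => ?_
  rw [hsym i j]; ring

lemma sqnorm_expand {d : ℕ} {D : Matrix (Fin d) (Fin d) ℝ} (hD : D.IsHermitian)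
    (a b : Fin d → ℝ) (t : ℝ) :
    sqnorm D (a + t • b) = sqnorm D a + 2 * t * (b ⬝ᵥ D *ᵥ a) + t ^ 2 * sqnorm D b := by
  have hs := dot_symm hD a b
  simp only [sqnorm, Matrix.mulVec_add, Matrix.mulVec_smul, dotProduct_add, add_dotProduct,
    dotProduct_smul, smul_dotProduct, smul_eq_mul]
  linear_combination t * hs

lemma sqnorm_smul {d : ℕ} (D : Matrix (Fin d) (Fin d) ℝ) (t : ℝ) (v : Fin d → ℝ) :
    sqnorm D (t • v) = t ^ 2 * sqnorm D v := by
  simp only [sqnorm, Matrix.mulVec_smul, dotProduct_smul, smul_dotProduct, smul_eq_mul]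
  ring

lemma sqnorm_nonneg {d : ℕ} {D : Matrix (Fin d) (Fin d) ℝ} (hD : D.PosDef)
    (v : Fin d → ℝ) : 0 ≤ sqnorm D v := by
  have := hD.posSemidef.dotProduct_mulVec_nonneg v
  simpa [sqnorm] using this

lemma sqnorm_continuous {d : ℕ} (D : Matrix (Fin d) (Fin d) ℝ) (y : Fin d → ℝ) :
    Continuous fun x : Fin d → ℝ => sqnorm D (x - y) := by
  simp only [sqnorm, dotProduct, Matrix.mulVec]
  fun_prop

lemma posdef_coercive {d : ℕ} {D : Matrix (Fin d) (Fin d) ℝ} (hD : D.PosDef) :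
    ∃ c > 0, ∀ v : Fin d → ℝ, c * ‖v‖ ^ 2 ≤ sqnorm D v := by
  rcases isEmpty_or_nonempty (Fin d) with hd | hd
  · refine ⟨1, one_pos, fun v => ?_⟩
    have hv : v = 0 := Subsingleton.elim v 0
    simp [hv, sqnorm]
  · haveI : Nontrivial (Fin d → ℝ) := by
      exact Function.nontrivial
    have hcomp : IsCompact (Metric.sphere (0 : Fin d → ℝ) 1) := isCompact_sphere _ _
    have hne : (Metric.sphere (0 : Fin d → ℝ) 1).Nonempty :=
      NormedSpace.sphere_nonempty.mpr zero_le_one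
    have hcont : Continuous fun v : Fin d → ℝ => sqnorm D v := by
      simp only [sqnorm, dotProduct, Matrix.mulVec]
      fun_prop
    obtain ⟨v0, hv0, hmin⟩ := hcomp.exists_isMinOn hne hcont.continuousOn
    have hv0norm : ‖v0‖ = 1 := by simpa using hv0
    have hv0ne : v0 ≠ 0 := by
      intro hcon; rw [hcon] at hv0norm; simp at hv0norm
    have hc : 0 < sqnorm D v0 := by
      have := hD.dotProduct_mulVec_pos hv0ne
      simpa [sqnorm] using this
    refine ⟨sqnorm D v0, hc, fun v => ?_⟩
    rcases eq_or_ne v 0 with rfl | hvne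
    · simp [sqnorm]
    · have hnv : 0 < ‖v‖ := norm_pos_iff.mpr hvne
      have hu : (‖v‖⁻¹ • v) ∈ Metric.sphere (0 : Fin d → ℝ) 1 := by
        simp [norm_smul, abs_of_pos (inv_pos.mpr hnv), inv_mul_cancel₀ hnv.ne']
      have hle : sqnorm D v0 ≤ sqnorm D (‖v‖⁻¹ • v) := hmin hu
      have hscale : sqnorm D (‖v‖⁻¹ • v) = (‖v‖⁻¹) ^ 2 * sqnorm D v :=
        sqnorm_smul D _ v
      have : sqnorm D v0 ≤ (‖v‖⁻¹) ^ 2 * sqnorm D v := hscale ▸ hle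
      calc sqnorm D v0 * ‖v‖ ^ 2 ≤ ((‖v‖⁻¹) ^ 2 * sqnorm D v) * ‖v‖ ^ 2 := by
            nlinarith
        _ = sqnorm D v := by field_simp

/-- If z is a type-1 approximation of Prox^D_{τh}(y) with precision ε, then there exists
r with ‖r‖_D ≤ √(2τε) such that (1/τ)D(y − z − r) ∈ ∂_ε h(z). -/
theorem type1_implies_approx_subdifferential {d : ℕ}
    (D : Matrix (Fin d) (Fin d) ℝ) (hD : D.PosDef)
    (τ : ℝ) (hτ : 0 < τ)
    (h : (Fin d → ℝ) → ℝ) (hconv : ConvexOn ℝ Set.univ h)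
    (y : Fin d → ℝ) (ε : ℝ) (hε : 0 ≤ ε)
    (G : (Fin d → ℝ) → ℝ)
    (hG : ∀ x, G x = h x + (1 / (2 * τ)) * sqnorm D (x - y))
    (z : Fin d → ℝ) (htype1 : ∀ x, G x ≥ G z - ε) :
    ∃ r : Fin d → ℝ, mnorm D r ≤ Real.sqrt (2 * τ * ε) ∧
      ∀ x, h x ≥ h z + ((1 / τ) • D.mulVec (y - z - r)) ⬝ᵥ (x - z) - ε := by
  classical
  have hDsym : D.IsHermitian := hD.1
  -- continuity of h and G
  have hHcont : Continuous h := by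
    have := hconv.continuousOn isOpen_univ
    rwa [continuousOn_univ] at this
  have hGcont : Continuous G := by
    have hGfun : G = fun x => h x + (1 / (2 * τ)) * sqnorm D (x - y) := funext hG
    rw [hGfun]
    exact hHcont.add (continuous_const.mul (sqnorm_continuous D y))
  -- strong convexity lower bound
  have key : ∀ x, G z - 2 * ε + (1 / (4 * τ)) * sqnorm D (x - z) ≤ G x := by
    intro x
    have hmid := htype1 (z + (1/2 : ℝ) • (x - z))
    have hmid_eq : z + (1/2 : ℝ) • (x - z) = (1/2 : ℝ) • z + (1/2 : ℝ) • x := by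
      module
    have hcv : h ((1/2 : ℝ) • z + (1/2 : ℝ) • x) ≤ (1/2) * h z + (1/2) * h x := by
      have := hconv.2 (Set.mem_univ z) (Set.mem_univ x)
        (by norm_num : (0:ℝ) ≤ 1/2) (by norm_num : (0:ℝ) ≤ 1/2) (by norm_num)
      simpa [smul_eq_mul] using this
    have he1 : sqnorm D (z + (1/2 : ℝ) • (x - z) - y)
        = sqnorm D (z - y) + 2 * (1/2) * ((x - z) ⬝ᵥ D *ᵥ (z - y)) + (1/2)^2 * sqnorm D (x - z) := by
      have : z + (1/2 : ℝ) • (x - z) - y = (z - y) + (1/2 : ℝ) • (x - z) := by abel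
      rw [this, sqnorm_expand hDsym]
    have he2 : sqnorm D (x - y)
        = sqnorm D (z - y) + 2 * 1 * ((x - z) ⬝ᵥ D *ᵥ (z - y)) + 1^2 * sqnorm D (x - z) := by
      have : x - y = (z - y) + (1 : ℝ) • (x - z) := by rw [one_smul]; abel
      rw [this, sqnorm_expand hDsym]
    rw [hG, he1, hmid_eq] at hmid
    rw [hG x, he2, hG z]
    rw [hG z] at hmid
    have hτ4 : (1 : ℝ) / (4 * τ) = (1/2) * (1 / (2 * τ)) := by
      field_simp; ring
    rw [hτ4]
    nlinarith [hmid, hcv, hτ.le]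
  -- compact sublevel set
  obtain ⟨c, hc, hcb⟩ := posdef_coercive hD
  set S : Set (Fin d → ℝ) := {x | G x ≤ G z} with hS
  have hzS : z ∈ S := by simp [hS]
  have hSclosed : IsClosed S := isClosed_le hGcont continuous_const
  set R : ℝ := Real.sqrt (8 * τ * ε / c) with hR
  have hsub : S ⊆ Metric.closedBall z R := by
    intro x hx
    have hGx : G x ≤ G z := hx
    have h1 := key x
    have h2 := hcb (x - z)
    have h3 : sqnorm D (x - z) ≤ 8 * τ * ε := by
      have h4 : (1 / (4 * τ)) * sqnorm D (x - z) ≤ 2 * ε := by linarith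
      have h5 : 0 < (4 : ℝ) * τ := by linarith
      rw [div_mul_eq_mul_div, div_le_iff₀ h5] at h4
      linarith
    have h6 : ‖x - z‖ ^ 2 ≤ 8 * τ * ε / c := by
      rw [le_div_iff₀ hc]
      nlinarith
    have h7 : ‖x - z‖ ≤ R := by
      rw [hR, Real.le_sqrt (norm_nonneg _) (by positivity)]
      exact h6
    simpa [Metric.mem_closedBall, dist_eq_norm] using h7
  have hScompact : IsCompact S :=
    IsCompact.of_isClosed_subset (isCompact_closedBall z R) hSclosed hsub
  obtain ⟨xs, hxsS, hxsmin⟩ := hScompact.exists_isMinOn ⟨z, hzS⟩ hGcont.continuousOn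
  have hglobal : ∀ x, G xs ≤ G x := by
    intro x
    by_cases hx : x ∈ S
    · exact hxsmin hx
    · have h1 : G z < G x := lt_of_not_ge hx
      have h2 : G xs ≤ G z := hxsmin hzS
      linarith
  set p : Fin d → ℝ := (1/τ) • D *ᵥ (y - xs) with hp
  have hpdot : ∀ v, p ⬝ᵥ v = (1/τ) * (v ⬝ᵥ D *ᵥ (y - xs)) := by
    intro v
    rw [hp, smul_dotProduct, smul_eq_mul, dotProduct_comm]
  -- subgradient inequality at xs
  have hsubgrad : ∀ x, h xs + p ⬝ᵥ (x - xs) ≤ h x := by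
    intro x
    set v : Fin d → ℝ := x - xs with hv
    set A : ℝ := h x - h xs - p ⬝ᵥ v with hA
    set B : ℝ := (1 / (2 * τ)) * sqnorm D v with hB
    have hBnn : 0 ≤ B := by
      have := sqnorm_nonneg hD v
      rw [hB]; positivity
    have hstep : ∀ t : ℝ, 0 < t → t ≤ 1 → 0 ≤ A + t * B := by
      intro t ht0 ht1
      have hmin := hglobal (xs + t • v)
      have hpt : xs + t • v = (1 - t) • xs + t • x := by
        rw [hv, smul_sub, sub_smul, one_smul]; abel
      have hcv : h ((1 - t) • xs + t • x) ≤ (1 - t) * h xs + t * h x := by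
        have := hconv.2 (Set.mem_univ xs) (Set.mem_univ x)
          (by linarith : (0:ℝ) ≤ 1 - t) ht0.le (by ring)
        simpa [smul_eq_mul] using this
      have hexp : sqnorm D (xs + t • v - y)
          = sqnorm D (xs - y) + 2 * t * (v ⬝ᵥ D *ᵥ (xs - y)) + t^2 * sqnorm D v := by
        have : xs + t • v - y = (xs - y) + t • v := by abel
        rw [this, sqnorm_expand hDsym]
      rw [hG, hG, hexp, hpt] at hmin
      have hdotflip : v ⬝ᵥ D *ᵥ (xs - y) = -(v ⬝ᵥ D *ᵥ (y - xs)) := by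
        have : xs - y = -(y - xs) := by abel
        rw [this, Matrix.mulVec_neg, dotProduct_neg]
      rw [hdotflip] at hmin
      have hAv : A = h x - h xs - (1/τ) * (v ⬝ᵥ D *ᵥ (y - xs)) := by
        rw [hA, hpdot]
      have hX : 0 ≤ t * (A + t * B) := by
        have hcomb : 0 ≤ t * (h x - h xs)
            + (1/(2*τ)) * (-(2*t*(v ⬝ᵥ D *ᵥ (y - xs))) + t^2 * sqnorm D v) := by
          linarith [hmin, hcv]
        have heq : t * (A + t * B) = t * (h x - h xs)
            + (1/(2*τ)) * (-(2*t*(v ⬝ᵥ D *ᵥ (y - xs))) + t^2 * sqnorm D v) := by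
          rw [hAv, hB]; field_simp; ring
        rw [heq]; exact hcomb
      exact (mul_nonneg_iff_of_pos_left ht0).mp hX
    by_contra hneg
    push_neg at hneg
    have hA0 : A < 0 := by rw [hA]; linarith
    rcases eq_or_lt_of_le hBnn with hB0 | hBpos
    · have := hstep 1 one_pos le_rfl
      rw [← hB0] at this; linarith
    · set t0 : ℝ := min 1 (-A / (2 * B)) with ht0d
      have ht0pos : 0 < t0 := lt_min one_pos (div_pos (neg_pos.mpr hA0) (by positivity))
      have ht0le : t0 ≤ 1 := min_le_left _ _
      have := hstep t0 ht0pos ht0le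
      have h1 : t0 * B ≤ (-A / (2 * B)) * B :=
        mul_le_mul_of_nonneg_right (min_le_right _ _) hBnn
      have h2 : (-A / (2 * B)) * B = -A / 2 := by
        field_simp
      linarith
  -- key inequality from type-1 at xs
  have hkey2 : h z - ε + (1 / (2 * τ)) * sqnorm D (z - xs) ≤ h xs + p ⬝ᵥ (z - xs) := by
    have ht := htype1 xs
    rw [hG, hG] at ht
    have hexp : sqnorm D (z - y)
        = sqnorm D (xs - y) + 2 * 1 * ((z - xs) ⬝ᵥ D *ᵥ (xs - y)) + 1^2 * sqnorm D (z - xs) := by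
      have : z - y = (xs - y) + (1:ℝ) • (z - xs) := by rw [one_smul]; abel
      rw [this, sqnorm_expand hDsym]
    have hdotflip : (z - xs) ⬝ᵥ D *ᵥ (xs - y) = -((z - xs) ⬝ᵥ D *ᵥ (y - xs)) := by
      have : xs - y = -(y - xs) := by abel
      rw [this, Matrix.mulVec_neg, dotProduct_neg]
    rw [hexp, hdotflip] at ht
    rw [hpdot]
    have heq : (1:ℝ)/τ * ((z - xs) ⬝ᵥ D *ᵥ (y - xs))
        = (1/(2*τ)) * (2 * ((z - xs) ⬝ᵥ D *ᵥ (y - xs))) := by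
      field_simp
    rw [heq]
    linarith [ht]
  -- bound on r
  have hssnn := sqnorm_nonneg hD (z - xs)
  have hsqbound : sqnorm D (z - xs) ≤ 2 * τ * ε := by
    have h1 := hsubgrad z
    have h2 := hkey2
    have hτ2 : 0 < 2 * τ := by linarith
    have : (1 / (2 * τ)) * sqnorm D (z - xs) ≤ ε := by linarith
    rw [div_mul_eq_mul_div, div_le_iff₀ hτ2] at this
    linarith
  refine ⟨xs - z, ?_, ?_⟩
  · have hflip : sqnorm D (xs - z) = sqnorm D (z - xs) := by
      have : xs - z = (-1 : ℝ) • (z - xs) := by simp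
      rw [this, sqnorm_smul]; ring
    have : sqnorm D (xs - z) ≤ 2 * τ * ε := by rw [hflip]; exact hsqbound
    have := Real.sqrt_le_sqrt this
    simpa [mnorm, sqnorm] using this
  · intro x
    have hvec : y - z - (xs - z) = y - xs := by abel
    rw [hvec]
    have h1 := hsubgrad x
    have hsplit : p ⬝ᵥ (x - xs) = p ⬝ᵥ (x - z) + p ⬝ᵥ (z - xs) := by
      rw [← dotProduct_add]
      congr 1
      abel
    rw [hsplit] at h1
    have hq : 0 ≤ (1 / (2 * τ)) * sqnorm D (z - xs) := by positivity
    have : h z - ε + p ⬝ᵥ (x - z) ≤ h x := by linarith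
    calc h z + ((1/τ) • D *ᵥ (y - xs)) ⬝ᵥ (x - z) - ε
        = h z - ε + p ⬝ᵥ (x - z) := by rw [← hp]; ring
      _ ≤ h x := this
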